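/- Let c > 0 and r_1 > r_2 > 0 with r_1 > 2c, and let w > 0 satisfy w·exp(w) = (r_1+r_2)·√e/(4c). Suppose (r_1+r_2)/(r_1−r_2) > 2w. Define β̄_1 = (r_1+r_2)/(4·r_1·w) + (r_1−r_2)/(2·r_1) and β̄_2 = (r_1+r_2)/(4·r_2·w) − (r_1−r_2)/(2·r_2). Then β̄_1, β̄_2 ∈ [0,1] and (β̄_1, β̄_2) is a Nash equilibrium of the two-CP asymmetric neutral game. -/
import Mathlib

lemma core_lem (α c w T b bb κ : ℝ) (hα : 0 < α) (hc : 0 < c)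
    (hTc : T = 2*c*Real.exp (w - 1/2)) (hsum : bb*α + κ = T)
    (hder : (1-bb)*α = (w-1/2)*T) (hw : 1/2 ≤ w) (hb : b ≤ 1) :
    (1-b)*α*Real.log (max ((b*α+κ)/(2*c)) 1) ≤
      (1-bb)*α*Real.log (max ((bb*α+κ)/(2*c)) 1) := by
  have hT : 0 < T := by rw [hTc]; positivity
  have hte : (1:ℝ) ≤ Real.exp (w - 1/2) := by
    rw [Real.one_le_exp_iff]; linarith
  have hbbarg : (bb*α+κ)/(2*c) = Real.exp (w - 1/2) := by
    rw [hsum, hTc]; field_simp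
  have hRHS : (1-bb)*α*Real.log (max ((bb*α+κ)/(2*c)) 1) = (w-1/2)*T*(w-1/2) := by
    rw [hbbarg, max_eq_left hte, Real.log_exp, hder]
  rw [hRHS]
  have hR0 : 0 ≤ (w-1/2)*T*(w-1/2) :=
    mul_nonneg (mul_nonneg (by linarith) hT.le) (by linarith)
  set t := (b*α+κ)/(2*c) with hdef
  by_cases ht : t ≤ 1
  · rw [max_eq_right ht, Real.log_one, mul_zero]; exact hR0
  · push_neg at ht
    rw [max_eq_left ht.le]
    have ht0 : 0 < t := by linarith
    have hlog : Real.log t ≤ (w-1/2) + t/Real.exp (w-1/2) - 1 := by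
      have h1 : Real.log (t / Real.exp (w-1/2)) ≤ t/Real.exp (w-1/2) - 1 :=
        Real.log_le_sub_one_of_pos (by positivity)
      rw [Real.log_div ht0.ne' (Real.exp_ne_zero _), Real.log_exp] at h1
      linarith
    have hbnn : 0 ≤ (1-b)*α := mul_nonneg (by linarith) hα.le
    have step1 : (1-b)*α*Real.log t ≤ (1-b)*α*((w-1/2) + t/Real.exp (w-1/2) - 1) :=
      mul_le_mul_of_nonneg_left hlog hbnn
    have hte' : t / Real.exp (w-1/2) = (b*α+κ)/T := by
      rw [hdef, hTc]
      rw [div_div]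
    have step2 : (1-b)*α*((w-1/2) + (b*α+κ)/T - 1) ≤ (w-1/2)*T*(w-1/2) := by
      have hκ : κ = T - bb*α := by linarith
      have hm : w - 1/2 = (1-bb)*α/T := by
        rw [eq_div_iff hT.ne']; linarith
      rw [hκ, hm]
      have key : ((1-bb)*α/T*T*((1-bb)*α/T)) - (1-b)*α*((1-bb)*α/T + (b*α + (T - bb*α))/T - 1)
          = α^2*(b-bb)^2/T := by
        field_simp
        ring
      linarith [div_nonneg (mul_nonneg (sq_nonneg α) (sq_nonneg (b-bb))) hT.le, key]
    calc (1-b)*α*Real.log t ≤ (1-b)*α*((w-1/2) + t/Real.exp (w-1/2) - 1) := step1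
      _ = (1-b)*α*((w-1/2) + (b*α+κ)/T - 1) := by rw [hte']
      _ ≤ (w-1/2)*T*(w-1/2) := step2

/-- Interior equilibrium of the two-CP asymmetric neutral game: with `r_1 > r_2 > 0`,
`c > 0`, `r_1 > 2c`, Lambert-W value `w` of `(r_1+r_2)√e/(4c)` and
`(r_1+r_2)/(r_1-r_2) > 2w`, the pair `(β̄_1, β̄_2)` lies in `[0,1]²` and is a Nash
equilibrium. -/
theorem stmt_17 (c r1 r2 : ℝ) (hc : 0 < c) (hr2 : 0 < r2) (hr12 : r2 < r1)
    (h2c : 2 * c < r1) (w : ℝ) (hw : 0 < w)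
    (hwW : w * Real.exp w = (r1 + r2) * Real.sqrt (Real.exp 1) / (4 * c))
    (hcond : 2 * w < (r1 + r2) / (r1 - r2)) :
    (r1 + r2) / (4 * r1 * w) + (r1 - r2) / (2 * r1) ∈ Set.Icc (0 : ℝ) 1 ∧
    (r1 + r2) / (4 * r2 * w) - (r1 - r2) / (2 * r2) ∈ Set.Icc (0 : ℝ) 1 ∧
    (∀ b ∈ Set.Icc (0 : ℝ) 1,
      (1 - b) * r1 *
          Real.log (max ((b * r1 +
            ((r1 + r2) / (4 * r2 * w) - (r1 - r2) / (2 * r2)) * r2) / (2 * c)) 1) ≤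
        (1 - ((r1 + r2) / (4 * r1 * w) + (r1 - r2) / (2 * r1))) * r1 *
          Real.log (max ((((r1 + r2) / (4 * r1 * w) + (r1 - r2) / (2 * r1)) * r1 +
            ((r1 + r2) / (4 * r2 * w) - (r1 - r2) / (2 * r2)) * r2) / (2 * c)) 1)) ∧
    (∀ b ∈ Set.Icc (0 : ℝ) 1,
      (1 - b) * r2 *
          Real.log (max ((((r1 + r2) / (4 * r1 * w) + (r1 - r2) / (2 * r1)) * r1 +
            b * r2) / (2 * c)) 1) ≤
        (1 - ((r1 + r2) / (4 * r2 * w) - (r1 - r2) / (2 * r2))) * r2 *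
          Real.log (max ((((r1 + r2) / (4 * r1 * w) + (r1 - r2) / (2 * r1)) * r1 +
            ((r1 + r2) / (4 * r2 * w) - (r1 - r2) / (2 * r2)) * r2) / (2 * c)) 1)) := by
  have hr1 : 0 < r1 := lt_trans hr2 hr12
  have hsq : Real.sqrt (Real.exp 1) = Real.exp (1/2) := (Real.exp_half 1).symm
  rw [hsq] at hwW
  have hw2 : 1/2 < w := by
    by_contra h
    push_neg at h
    have h1 : Real.exp (1/2)/2 < (r1+r2)*Real.exp (1/2)/(4*c) := by
      rw [div_lt_div_iff₀ (by norm_num) (by positivity)]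
      nlinarith [Real.exp_pos (1/2:ℝ)]
    have h2 : w * Real.exp w ≤ 1/2 * Real.exp (1/2) :=
      mul_le_mul h (Real.exp_le_exp.2 h) (Real.exp_pos w).le (by norm_num)
    rw [hwW] at h2
    linarith
  have h4 : w * Real.exp w * (4*c) = (r1+r2)*Real.exp (1/2) := by
    rw [hwW]; field_simp
  have hs : r1 + r2 = 4*c*w*Real.exp (w - 1/2) := by
    rw [Real.exp_sub]
    field_simp
    linear_combination -h4
  set b1 := (r1 + r2) / (4 * r1 * w) + (r1 - r2) / (2 * r1) with hb1def
  set b2 := (r1 + r2) / (4 * r2 * w) - (r1 - r2) / (2 * r2) with hb2def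
  set T := 2*c*Real.exp (w - 1/2) with hTdef
  have hT0 : 0 < T := by rw [hTdef]; positivity
  have hsT : r1 + r2 = 2*w*T := by rw [hTdef]; linarith [hs]
  have h2wT : (r1+r2)/(2*w) = T := by
    rw [hsT]; field_simp
  have hsum : b1*r1 + b2*r2 = T := by
    rw [← h2wT, hb1def, hb2def]
    field_simp
    ring
  have hder1 : (1-b1)*r1 = (w-1/2)*T := by
    rw [← h2wT, hb1def]
    field_simp
    ring
  have hder2 : (1-b2)*r2 = (w-1/2)*T := by
    rw [← h2wT, hb2def]
    field_simp
    ring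
  have hcd : 2*w*(r1-r2) < r1+r2 := by
    rw [lt_div_iff₀ (by linarith)] at hcond
    linarith
  have hb1mem : b1 ∈ Set.Icc (0:ℝ) 1 := by
    constructor
    · apply add_nonneg
      · apply div_nonneg (by linarith) (by positivity)
      · apply div_nonneg (by linarith) (by linarith)
    · by_contra hgt
      push_neg at hgt
      have hneg : (1-b1)*r1 < 0 := mul_neg_of_neg_of_pos (by linarith) hr1
      rw [hder1] at hneg
      have := mul_nonneg (by linarith : (0:ℝ) ≤ w-1/2) hT0.le
      linarith
  have hb2mem : b2 ∈ Set.Icc (0:ℝ) 1 := by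
    constructor
    · have hrw : b2 = ((r1+r2) - 2*w*(r1-r2))/(4*r2*w) := by
        rw [hb2def]; field_simp; ring
      rw [hrw]
      apply div_nonneg (by linarith) (by positivity)
    · by_contra hgt
      push_neg at hgt
      have hneg : (1-b2)*r2 < 0 := mul_neg_of_neg_of_pos (by linarith) hr2
      rw [hder2] at hneg
      have := mul_nonneg (by linarith : (0:ℝ) ≤ w-1/2) hT0.le
      linarith
  refine ⟨hb1mem, hb2mem, ?_, ?_⟩
  · intro b hb
    exact core_lem r1 c w T b b1 (b2*r2) hr1 hc hTdef hsum hder1 hw2.le hb.2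
  · intro b hb
    rw [show b1*r1 + b*r2 = b*r2 + b1*r1 from add_comm _ _,
        show b1*r1 + b2*r2 = b2*r2 + b1*r1 from add_comm _ _]
    exact core_lem r2 c w T b b2 (b1*r1) hr2 hc hTdef
      (by rw [add_comm]; exact hsum) hder2 hw2.le hb.2
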